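/- Suppose additionally y ∈ A and λ ∈ F satisfy hy − yh = λy. Then for every s ≥ 1, in A[[t]]: v · y^s · u = (1−et)^{−sλ} · Σ_{ℓ≥0} d^{(ℓ)}(y^s) · h_{1}^{⟨ℓ⟩} · t^ℓ, where u := u_0 and v := v_0 = u⁻¹; equivalently, the twisted antipode satisfies S(y^s) = (−1)^s (1−et)^{−sλ} Σ_{ℓ≥0} d^{(ℓ)}(y^s) h_1^{⟨ℓ⟩} t^ℓ. (This is identity (3.13) of the paper's Lemma 3.4, proved in U(𝐊)[[t]] for y = D_K(x^α), λ = α_k − α_{−k}; only the stated commutation relations are used.) -/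

import Mathlib

/-- Falling factorial `x_a^{[m]} := (x+a)(x+a-1)⋯(x+a-m+1)` in an `F`-algebra `A`. -/
def fallPow {F A : Type*} [Field F] [Ring A] [Algebra F A] (x : A) (a : F) : ℕ → A
  | 0 => 1
  | m + 1 => fallPow x a m * (x + algebraMap F A (a - (m : F)))

/-- Rising factorial `x_a^{⟨m⟩} := (x+a)(x+a+1)⋯(x+a+m-1)` in an `F`-algebra `A`. -/
def risePow {F A : Type*} [Field F] [Ring A] [Algebra F A] (x : A) (a : F) : ℕ → A
  | 0 => 1
  | m + 1 => risePow x a m * (x + algebraMap F A (a + (m : F)))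

/-- Scalar rising factorial `c^{⟨m⟩} = c(c+1)⋯(c+m-1)` in `F`. -/
def riseC {F : Type*} [Field F] (c : F) (m : ℕ) : F :=
  ∏ i ∈ Finset.range m, (c + (i : F))

/-- `(1−et)^{−c} = Σ_{r≥0} (1/r!) c^{⟨r⟩} e^r t^r ∈ A[[t]]`. -/
noncomputable def oneSubEtNegPow {F A : Type*} [Field F] [Ring A] [Algebra F A]
    (e : A) (c : F) : PowerSeries A :=
  PowerSeries.mk fun r => (((r.factorial : F))⁻¹ * riseC c r) • e ^ r

/-- `u_a = Σ_{r≥0} ((−1)^r/r!) h_{−a}^{[r]} e^r t^r ∈ A[[t]]`. -/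
noncomputable def uSer {F A : Type*} [Field F] [Ring A] [Algebra F A] (h e : A) (a : F) :
    PowerSeries A :=
  PowerSeries.mk fun r => ((-1 : F) ^ r / (r.factorial : F)) • (fallPow h (-a) r * e ^ r)

/-- `v_a = Σ_{r≥0} (1/r!) h_a^{[r]} e^r t^r ∈ A[[t]]`. -/
noncomputable def vSer {F A : Type*} [Field F] [Ring A] [Algebra F A] (h e : A) (a : F) :
    PowerSeries A :=
  PowerSeries.mk fun r => ((r.factorial : F))⁻¹ • (fallPow h a r * e ^ r)

/-- The divided power `d^{(ℓ)} = (1/ℓ!)(ad e)^ℓ` of the inner derivation `ad e`. -/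
def dPow (F : Type*) {A : Type*} [Field F] [Ring A] [Algebra F A]
    (e : A) (ℓ : ℕ) (x : A) : A :=
  ((ℓ.factorial : F))⁻¹ • ((fun z => e * z - z * e)^[ℓ] x)

namespace DefAux

open PowerSeries Finset.Nat

section basic

variable {F A : Type*} [Field F] [Ring A] [Algebra F A]

lemma fallPow_succ (x : A) (a : F) (m : ℕ) :
    fallPow x a (m+1) = fallPow x a m * (x + algebraMap F A (a - (m:F))) := rfl

lemma risePow_succ (x : A) (a : F) (m : ℕ) :
    risePow x a (m+1) = risePow x a m * (x + algebraMap F A (a + (m:F))) := rfl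

lemma riseC_succ (c : F) (m : ℕ) : riseC c (m+1) = riseC c m * (c + m) :=
  Finset.prod_range_succ _ _

lemma mul_alg (x : A) (c : F) : x * algebraMap F A c = c • x := by
  rw [← Algebra.commutes, ← Algebra.smul_def]

lemma self_comm_add (x : A) (c : F) :
    x * (x + algebraMap F A c) = (x + algebraMap F A c) * x := by
  simp [mul_add, add_mul, Algebra.commutes]

lemma comm_fallPow (x : A) (a : F) (m : ℕ) : x * fallPow x a m = fallPow x a m * x := by
  induction m with
  | zero => simp [fallPow]
  | succ m ih => rw [fallPow_succ, ← mul_assoc, ih, mul_assoc, self_comm_add, ← mul_assoc]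

lemma comm_risePow (x : A) (a : F) (m : ℕ) : x * risePow x a m = risePow x a m * x := by
  induction m with
  | zero => simp [risePow]
  | succ m ih => rw [risePow_succ, ← mul_assoc, ih, mul_assoc, self_comm_add, ← mul_assoc]

lemma fallPow_succ_left (x : A) (a : F) (m : ℕ) :
    fallPow x a (m+1) = (x + algebraMap F A a) * fallPow x (a-1) m := by
  induction m with
  | zero => simp [fallPow]
  | succ m ih =>
    rw [fallPow_succ, ih, mul_assoc,
      show a - ((m+1 : ℕ) : F) = (a-1) - (m:F) by push_cast; ring, ← fallPow_succ]

lemma risePow_succ_left (x : A) (a : F) (m : ℕ) :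
    risePow x a (m+1) = (x + algebraMap F A a) * risePow x (a+1) m := by
  induction m with
  | zero => simp [risePow]
  | succ m ih =>
    rw [risePow_succ, ih, mul_assoc,
      show a + ((m+1 : ℕ) : F) = (a+1) + (m:F) by push_cast; ring, ← risePow_succ]

/-- swap lemma: if `x*y = y*x + c•y` then `x*(y*w) = y*(x*w) + c•(y*w)`. -/
lemma swap_mul {x y z : A} {c : F} (hxy : x * y = y * x + c • z) (w : A) :
    x * (y * w) = y * (x * w) + c • (z * w) := by
  rw [← mul_assoc, hxy, add_mul, smul_mul_assoc, mul_assoc]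

lemma fact_scalar [CharZero F] (n : ℕ) :
    ((n:F)+1) * (((n+1).factorial : F))⁻¹ = ((n.factorial : F))⁻¹ := by
  have h1 : ((n:F)+1) ≠ 0 := Nat.cast_add_one_ne_zero n
  have h2 : ((n.factorial : F)) ≠ 0 := Nat.cast_ne_zero.mpr n.factorial_ne_zero
  rw [Nat.factorial_succ]
  push_cast
  field_simp

end basic

section withHE

variable {F A : Type*} [Field F] [Ring A] [Algebra F A]
variable {h e : A} (he : h * e - e * h = e)

include he

lemma hmul_e : h * e = e * h + (1:F) • e := by
  rw [one_smul, sub_eq_iff_eq_add.mp he]; abel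

lemma emul_h : e * h = h * e - e := by
  rw [sub_eq_iff_eq_add.mp he]; abel

lemma e_mul_add (c : F) :
    e * (h + algebraMap F A c) = (h + algebraMap F A (c - 1)) * e := by
  rw [mul_add, add_mul, ← Algebra.commutes c e, emul_h he, map_sub, map_one, sub_mul, one_mul]
  abel

lemma e_mul_fallPow (a : F) (m : ℕ) :
    e * fallPow h a m = fallPow h (a-1) m * e := by
  induction m with
  | zero => simp [fallPow]
  | succ m ih =>
    rw [fallPow_succ, ← mul_assoc, ih, mul_assoc, e_mul_add he, ← mul_assoc,
      show a - (m:F) - 1 = (a-1) - (m:F) by ring, ← fallPow_succ]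

lemma e_mul_risePow (a : F) (m : ℕ) :
    e * risePow h a m = risePow h (a-1) m * e := by
  induction m with
  | zero => simp [risePow]
  | succ m ih =>
    rw [risePow_succ, ← mul_assoc, ih, mul_assoc, e_mul_add he, ← mul_assoc,
      show a + (m:F) - 1 = (a-1) + (m:F) by ring, ← risePow_succ]

/-- `h * e^m = e^m * h + m • e^m`. -/
lemma h_mul_pow_e (m : ℕ) : h * e ^ m = e ^ m * h + (m : F) • e ^ m := by
  induction m with
  | zero => simp
  | succ m ih =>
    rw [pow_succ', swap_mul (hmul_e (F := F) he) (e ^ m), ih]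
    push_cast
    simp only [mul_add, mul_smul_comm, mul_assoc]
    module

lemma pe (n : ℕ) : e ^ n * h = h * e ^ n - (n:F) • e ^ n := by
  rw [h_mul_pow_e (F := F) he n]; abel

lemma pe' (n : ℕ) : e ^ n * (h * e) = h * e ^ (n+1) - (n:F) • e ^ (n+1) := by
  rw [← mul_assoc, pe (F := F) he, sub_mul, smul_mul_assoc, ← pow_succ, mul_assoc, ← pow_succ]

/-- ad-weight. -/
lemma ad_weight {x : A} {c : F} (hx : h * x = x * h + c • x) (ℓ : ℕ) :
    h * ((fun w => e * w - w * e)^[ℓ] x) =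
      ((fun w => e * w - w * e)^[ℓ] x) * h + (c + ℓ) • ((fun w => e * w - w * e)^[ℓ] x) := by
  induction ℓ with
  | zero => simpa using hx
  | succ ℓ ih =>
    rw [Function.iterate_succ_apply']
    set X := (fun w => e * w - w * e)^[ℓ] x with hX
    push_cast
    have h1 : h * (e * X) = e * (X * h) + (c + ℓ) • (e * X) + (1:F) • (e * X) := by
      rw [swap_mul (hmul_e (F := F) he) X, ih, mul_add, mul_smul_comm]
      try abel
    have h2 : h * (X * e) = X * (e * h) + (1:F) • (X * e) + (c + ℓ) • (X * e) := by
      rw [swap_mul ih e, hmul_e (F := F) he, mul_add, mul_smul_comm]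
      try abel
    simp only [mul_sub, sub_mul, smul_sub, h1, h2, mul_assoc]
    module

omit he in
/-- `e` ladder on divided powers. -/
lemma e_mul_dPow [CharZero F] (z : A) (ℓ : ℕ) :
    e * dPow F e ℓ z = dPow F e ℓ z * e + ((ℓ : F) + 1) • dPow F e (ℓ+1) z := by
  have hfac : ((ℓ.factorial : F)) ≠ 0 := Nat.cast_ne_zero.mpr ℓ.factorial_ne_zero
  have hfac1 : (((ℓ+1).factorial : F)) ≠ 0 := Nat.cast_ne_zero.mpr (ℓ+1).factorial_ne_zero
  have hiter : (fun w => e * w - w * e)^[ℓ+1] z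
      = e * ((fun w => e * w - w * e)^[ℓ] z) - ((fun w => e * w - w * e)^[ℓ] z) * e := by
    rw [Function.iterate_succ_apply']
  have key : e * ((fun w => e * w - w * e)^[ℓ] z)
      = ((fun w => e * w - w * e)^[ℓ] z) * e + (fun w => e * w - w * e)^[ℓ+1] z := by
    rw [hiter]; abel
  unfold dPow
  rw [mul_smul_comm, key, smul_add, smul_mul_assoc, smul_smul]
  congr 1
  have hl1 : ((ℓ:F)+1) ≠ 0 := Nat.cast_add_one_ne_zero ℓ
  have hs : ((ℓ.factorial : F))⁻¹ = ((ℓ:F)+1) * (((ℓ+1).factorial : F))⁻¹ := by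
    rw [Nat.factorial_succ]
    push_cast
    field_simp
  rw [hs]

/-- weight of divided powers. -/
lemma h_mul_dPow {z : A} {μ : F} (hz : h * z = z * h + μ • z) (ℓ : ℕ) :
    h * dPow F e ℓ z = dPow F e ℓ z * h + (μ + ℓ) • dPow F e ℓ z := by
  unfold dPow
  rw [mul_smul_comm, ad_weight he hz ℓ, smul_add, smul_mul_assoc, smul_smul, smul_smul,
    mul_comm ((ℓ.factorial : F))⁻¹]

omit he in
lemma weight_pow {y : A} {lam : F} (hy : h * y = y * h + lam • y) (s : ℕ) :
    h * y ^ s = y ^ s * h + ((s:F) * lam) • y ^ s := by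
  induction s with
  | zero => simp
  | succ s ih =>
    rw [pow_succ', swap_mul hy (y ^ s), ih]
    push_cast
    simp only [mul_add, mul_smul_comm, mul_assoc, smul_smul]
    rw [← pow_succ']
    module

/-- key commutation for `r * (h*e)`. -/
lemma r_he (ℓ : ℕ) :
    risePow h (1:F) ℓ * (h * e)
      = e * (risePow h (1:F) ℓ * (h + algebraMap F A (1 + (ℓ:F)))) := by
  have fre : risePow h (1:F) ℓ * e = e * risePow h (2:F) ℓ := by
    have h2 := e_mul_risePow he (2:F) ℓ
    norm_num at h2
    rw [h2]
  have f8 : risePow h (2:F) ℓ * (h + algebraMap F A 1) = risePow h (1:F) ℓ * (h + algebraMap F A (1 + (ℓ:F))) := by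
    rw [← risePow_succ, risePow_succ_left, show (1:F)+1 = (2:F) by norm_num, map_one,
      mul_add, add_mul, mul_one, one_mul, comm_risePow]
  calc risePow h (1:F) ℓ * (h * e)
      = h * (risePow h (1:F) ℓ * e) := by
        rw [← mul_assoc, ← comm_risePow, mul_assoc]
    _ = (h * e) * risePow h (2:F) ℓ := by rw [fre, ← mul_assoc]
    _ = (e * h + (1:F) • e) * risePow h (2:F) ℓ := by rw [hmul_e (F := F) he]
    _ = e * (h * risePow h (2:F) ℓ) + (1:F) • (e * risePow h (2:F) ℓ) := by
        rw [add_mul, mul_assoc, smul_mul_assoc]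
    _ = e * (risePow h (2:F) ℓ * h) + e * (risePow h (2:F) ℓ * algebraMap F A 1) := by
        rw [comm_risePow, one_smul, map_one, mul_one]
    _ = e * (risePow h (2:F) ℓ * (h + algebraMap F A 1)) := by rw [← mul_add, ← mul_add]
    _ = e * (risePow h (1:F) ℓ * (h + algebraMap F A (1 + (ℓ:F)))) := by rw [f8]

/-- the core computation for the right-hand side. -/
lemma coreC [CharZero F] {z : A} {μ : F} (hz : h * z = z * h + μ • z) (ℓ : ℕ) :
    h * e * (dPow F e ℓ z * risePow h (1:F) ℓ) - dPow F e ℓ z * risePow h (1:F) ℓ * (h * e)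
      = μ • (e * (dPow F e ℓ z * risePow h (1:F) ℓ))
        + ((ℓ:F) + 1) • (dPow F e (ℓ+1) z * risePow h (1:F) (ℓ+1)) := by
  have f1 := h_mul_dPow he hz ℓ
  have f3 := h_mul_dPow he hz (ℓ+1)
  have f2 := e_mul_dPow (F := F) (e := e) z ℓ
  have f4 : h * risePow h (1:F) ℓ = risePow h (1:F) ℓ * h := comm_risePow h 1 ℓ
  push_cast at f3
  rw [risePow_succ]
  rw [mul_assoc h e, swap_mul f2 (risePow h (1:F) ℓ)]
  rw [mul_assoc (dPow F e ℓ z), r_he he ℓ]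
  rw [mul_add, mul_smul_comm, swap_mul f1 (e * risePow h (1:F) ℓ),
    swap_mul (hmul_e (F := F) he) (risePow h (1:F) ℓ), f4,
    swap_mul f3 (risePow h (1:F) ℓ), f4]
  have fc : risePow h (1:F) ℓ * algebraMap F A (1 + (ℓ:F)) = (1 + (ℓ:F)) • risePow h (1:F) ℓ :=
    mul_alg _ _
  simp only [mul_add, smul_add, smul_smul, one_smul, mul_smul_comm, add_mul, smul_mul_assoc,
    mul_assoc, fc]
  module

end withHE

section series

variable (F : Type*) {A : Type*} [Field F] [Ring A] [Algebra F A]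

/-- Formal derivative of a power series over a noncommutative algebra. -/
noncomputable def Dser (f : PowerSeries A) : PowerSeries A :=
  PowerSeries.mk fun n => ((n : F) + 1) • PowerSeries.coeff (R := A) (n+1) f

lemma coeff_Dser (f : PowerSeries A) (n : ℕ) :
    PowerSeries.coeff (R := A) n (Dser F f) = ((n : F) + 1) • PowerSeries.coeff (R := A) (n+1) f :=
  PowerSeries.coeff_mk _ _

lemma Dser_C (a : A) : Dser F (PowerSeries.C (R := A) a) = 0 := by
  ext n
  rw [coeff_Dser, PowerSeries.coeff_C]
  simp

lemma Dser_mul (f g : PowerSeries A) :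
    Dser F (f * g) = Dser F f * g + f * Dser F g := by
  ext n
  rw [map_add, coeff_Dser, PowerSeries.coeff_mul, PowerSeries.coeff_mul,
    PowerSeries.coeff_mul, Finset.smul_sum]
  have key : ∀ p ∈ Finset.HasAntidiagonal.antidiagonal (n+1),
      ((n : F) + 1) • (PowerSeries.coeff (R := A) p.1 f * PowerSeries.coeff (R := A) p.2 g)
        = (p.1 : F) • (PowerSeries.coeff (R := A) p.1 f * PowerSeries.coeff (R := A) p.2 g)
          + (p.2 : F) • (PowerSeries.coeff (R := A) p.1 f * PowerSeries.coeff (R := A) p.2 g) := by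
    intro p hp
    rw [← add_smul]
    congr 1
    have hpn := Finset.HasAntidiagonal.mem_antidiagonal.mp hp
    rw [show (n:F) + 1 = ((n+1 : ℕ) : F) by push_cast; ring, ← hpn]
    push_cast
    ring
  rw [Finset.sum_congr rfl key, Finset.sum_add_distrib]
  congr 1
  · rw [sum_antidiagonal_succ
      (f := fun p => (p.1 : F) • (PowerSeries.coeff (R := A) p.1 f * PowerSeries.coeff (R := A) p.2 g))]
    simp only [Nat.cast_zero, zero_smul, zero_add]
    refine Finset.sum_congr rfl fun p hp => ?_
    rw [coeff_Dser, smul_mul_assoc]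
    push_cast
    ring_nf
  · rw [sum_antidiagonal_succ'
      (f := fun p => (p.2 : F) • (PowerSeries.coeff (R := A) p.1 f * PowerSeries.coeff (R := A) p.2 g))]
    simp only [Nat.cast_zero, zero_smul, zero_add]
    refine Finset.sum_congr rfl fun p hp => ?_
    rw [coeff_Dser, mul_smul_comm]
    push_cast
    ring_nf

end series

section main

variable {F A : Type*} [Field F] [CharZero F] [Ring A] [Algebra F A]
variable {h e : A} (he : h * e - e * h = e)

include he

lemma Dv : Dser F (vSer h e (0:F)) = PowerSeries.C (R := A) (h * e) * vSer h e (0:F) := by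
  ext n
  rw [coeff_Dser, PowerSeries.coeff_C_mul]
  simp only [vSer, PowerSeries.coeff_mk]
  rw [smul_smul, mul_smul_comm]
  have key : fallPow h (0:F) (n+1) * e ^ (n+1) = h * e * (fallPow h (0:F) n * e ^ n) := by
    rw [fallPow_succ_left, map_zero, add_zero]
    calc h * fallPow h ((0:F)-1) n * e ^ (n+1)
        = h * ((fallPow h ((0:F)-1) n * e) * e ^ n) := by
          rw [pow_succ', mul_assoc h, ← mul_assoc (fallPow h ((0:F)-1) n)]
      _ = h * ((e * fallPow h (0:F) n) * e ^ n) := by rw [← e_mul_fallPow he 0 n]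
      _ = h * e * (fallPow h (0:F) n * e ^ n) := by rw [mul_assoc e, ← mul_assoc h]
  rw [key]
  congr 1
  exact fact_scalar n

lemma Du : Dser F (uSer h e (0:F)) = -(uSer h e (0:F) * PowerSeries.C (R := A) (h * e)) := by
  ext n
  rw [coeff_Dser, map_neg, PowerSeries.coeff_mul_C]
  simp only [uSer, PowerSeries.coeff_mk, neg_zero]
  rw [smul_smul, smul_mul_assoc, ← neg_smul]
  have key : fallPow h (0:F) (n+1) * e ^ (n+1) = fallPow h (0:F) n * e ^ n * (h * e) := by
    have halg : algebraMap F A ((0:F) - (n:F)) * e ^ (n+1) = -((n:F) • e ^ (n+1)) := by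
      rw [← Algebra.smul_def, zero_sub, neg_smul]
    calc fallPow h (0:F) (n+1) * e ^ (n+1)
        = fallPow h (0:F) n * ((h + algebraMap F A ((0:F) - (n:F))) * e ^ (n+1)) := by
          rw [fallPow_succ, mul_assoc]
      _ = fallPow h (0:F) n * (h * e ^ (n+1) - (n:F) • e ^ (n+1)) := by
          rw [add_mul, halg, sub_eq_add_neg]
      _ = fallPow h (0:F) n * (e ^ n * (h * e)) := by rw [← pe' he]
      _ = fallPow h (0:F) n * e ^ n * (h * e) := by rw [mul_assoc]
  rw [key]
  congr 1
  have h2 : ((n.factorial : F)) ≠ 0 := Nat.cast_ne_zero.mpr n.factorial_ne_zero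
  have h1 : ((n:F)+1) ≠ 0 := Nat.cast_add_one_ne_zero n
  have hfac : (((n+1).factorial : F)) = ((n:F)+1) * (n.factorial : F) := by
    rw [Nat.factorial_succ]; push_cast; ring
  rw [hfac, pow_succ]
  field_simp

lemma DB (μ : F) :
    Dser F (oneSubEtNegPow e μ)
      = PowerSeries.C (R := A) (h * e) * oneSubEtNegPow e μ
        - oneSubEtNegPow e μ * PowerSeries.C (R := A) (h * e)
        + μ • (PowerSeries.C (R := A) e * oneSubEtNegPow e μ) := by
  ext n
  rw [map_add, map_sub, coeff_Dser, PowerSeries.coeff_C_mul, PowerSeries.coeff_mul_C,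
    PowerSeries.coeff_smul, PowerSeries.coeff_C_mul]
  simp only [oneSubEtNegPow, PowerSeries.coeff_mk]
  rw [smul_smul,
    show ((n:F)+1) * ((((n+1).factorial : F))⁻¹ * riseC μ (n+1))
      = ((n.factorial : F))⁻¹ * (riseC μ n * (μ + n)) by
        rw [← mul_assoc, fact_scalar n, riseC_succ]]
  simp only [mul_smul_comm, smul_mul_assoc]
  rw [pe' (F := F) he n]
  have hpow : e * e ^ n = e ^ (n+1) := by rw [← pow_succ']
  simp only [smul_sub, smul_smul, hpow, mul_assoc]
  module

omit he in
lemma CeB (μ : F) :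
    PowerSeries.C (R := A) e * oneSubEtNegPow e μ = oneSubEtNegPow e μ * PowerSeries.C (R := A) e := by
  ext n
  rw [PowerSeries.coeff_C_mul, PowerSeries.coeff_mul_C]
  simp only [oneSubEtNegPow, PowerSeries.coeff_mk]
  rw [mul_smul_comm, smul_mul_assoc, ← pow_succ, ← pow_succ']

lemma DDz {z : A} {μ : F} (hz : h * z = z * h + μ • z) :
    Dser F (PowerSeries.mk fun ℓ => dPow F e ℓ z * risePow h (1:F) ℓ)
      = PowerSeries.C (R := A) (h * e) * (PowerSeries.mk fun ℓ => dPow F e ℓ z * risePow h (1:F) ℓ)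
        - (PowerSeries.mk fun ℓ => dPow F e ℓ z * risePow h (1:F) ℓ) * PowerSeries.C (R := A) (h * e)
        - μ • (PowerSeries.C (R := A) e * (PowerSeries.mk fun ℓ => dPow F e ℓ z * risePow h (1:F) ℓ)) := by
  ext n
  rw [map_sub, map_sub, coeff_Dser, PowerSeries.coeff_C_mul, PowerSeries.coeff_mul_C,
    PowerSeries.coeff_smul, PowerSeries.coeff_C_mul]
  simp only [PowerSeries.coeff_mk]
  rw [coreC he hz n]
  abel

end main

end DefAux

/-- Deformed antipode of powers: if `he − eh = e` and `hy − yh = λ·y`, then for `s ≥ 1`,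
`v · y^s · u = (1−et)^{−sλ} · Σ_{ℓ≥0} d^{(ℓ)}(y^s) h_1^{⟨ℓ⟩} t^ℓ` in `A[[t]]`,
where `u = u_0` and `v = v_0 = u⁻¹`. -/
theorem deformed_antipode_pow {F A : Type*} [Field F] [CharZero F] [Ring A] [Algebra F A]
    (h e : A) (he : h * e - e * h = e)
    (y : A) (lam : F) (hy : h * y - y * h = lam • y) (s : ℕ) (hs : 1 ≤ s) :
    vSer h e (0 : F) * PowerSeries.C (R := A) (y ^ s) * uSer h e (0 : F) =
      oneSubEtNegPow e ((s : F) * lam) *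
        PowerSeries.mk (fun ℓ => dPow F e ℓ (y ^ s) * risePow h (1 : F) ℓ) := by
  classical
  have hy' : h * y = y * h + lam • y := by rw [sub_eq_iff_eq_add.mp hy]; abel
  have hz : h * y ^ s = y ^ s * h + ((s:F) * lam) • y ^ s := DefAux.weight_pow hy' s
  have DL : DefAux.Dser F (vSer h e (0:F) * PowerSeries.C (R := A) (y ^ s) * uSer h e (0:F))
      = PowerSeries.C (R := A) (h*e) * (vSer h e (0:F) * PowerSeries.C (R := A) (y ^ s) * uSer h e (0:F))
        - (vSer h e (0:F) * PowerSeries.C (R := A) (y ^ s) * uSer h e (0:F)) * PowerSeries.C (R := A) (h*e) := by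
    rw [DefAux.Dser_mul, DefAux.Dser_mul, DefAux.Dv he, DefAux.Du he, DefAux.Dser_C]
    noncomm_ring
  have DR : DefAux.Dser F (oneSubEtNegPow e ((s:F)*lam)
        * PowerSeries.mk (fun ℓ => dPow F e ℓ (y ^ s) * risePow h (1 : F) ℓ))
      = PowerSeries.C (R := A) (h*e) * (oneSubEtNegPow e ((s:F)*lam)
          * PowerSeries.mk (fun ℓ => dPow F e ℓ (y ^ s) * risePow h (1 : F) ℓ))
        - (oneSubEtNegPow e ((s:F)*lam)
          * PowerSeries.mk (fun ℓ => dPow F e ℓ (y ^ s) * risePow h (1 : F) ℓ))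
            * PowerSeries.C (R := A) (h*e) := by
    rw [DefAux.Dser_mul, DefAux.DB he ((s:F)*lam), DefAux.DDz he hz]
    have hswap : PowerSeries.C (R := A) e * (oneSubEtNegPow e ((s:F)*lam)
          * PowerSeries.mk (fun ℓ => dPow F e ℓ (y ^ s) * risePow h (1 : F) ℓ))
        = oneSubEtNegPow e ((s:F)*lam) * (PowerSeries.C (R := A) e
          * PowerSeries.mk (fun ℓ => dPow F e ℓ (y ^ s) * risePow h (1 : F) ℓ)) := by
      rw [← mul_assoc, DefAux.CeB (e := e) ((s:F)*lam), mul_assoc]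
    simp only [add_mul, sub_mul, mul_add, mul_sub, smul_mul_assoc, mul_smul_comm, mul_assoc, hswap]
    abel
  have recL : ∀ n : ℕ, ((n:F)+1) • PowerSeries.coeff (R := A) (n+1)
        (vSer h e (0:F) * PowerSeries.C (R := A) (y ^ s) * uSer h e (0:F))
      = h * e * PowerSeries.coeff (R := A) n (vSer h e (0:F) * PowerSeries.C (R := A) (y ^ s) * uSer h e (0:F))
        - PowerSeries.coeff (R := A) n (vSer h e (0:F) * PowerSeries.C (R := A) (y ^ s) * uSer h e (0:F)) * (h * e) := by
    intro n
    have hcoe := congrArg (PowerSeries.coeff (R := A) n) DL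
    rwa [DefAux.coeff_Dser, map_sub, PowerSeries.coeff_C_mul, PowerSeries.coeff_mul_C] at hcoe
  have recR : ∀ n : ℕ, ((n:F)+1) • PowerSeries.coeff (R := A) (n+1)
        (oneSubEtNegPow e ((s:F)*lam)
          * PowerSeries.mk (fun ℓ => dPow F e ℓ (y ^ s) * risePow h (1 : F) ℓ))
      = h * e * PowerSeries.coeff (R := A) n (oneSubEtNegPow e ((s:F)*lam)
          * PowerSeries.mk (fun ℓ => dPow F e ℓ (y ^ s) * risePow h (1 : F) ℓ))
        - PowerSeries.coeff (R := A) n (oneSubEtNegPow e ((s:F)*lam)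
          * PowerSeries.mk (fun ℓ => dPow F e ℓ (y ^ s) * risePow h (1 : F) ℓ)) * (h * e) := by
    intro n
    have hcoe := congrArg (PowerSeries.coeff (R := A) n) DR
    rwa [DefAux.coeff_Dser, map_sub, PowerSeries.coeff_C_mul, PowerSeries.coeff_mul_C] at hcoe
  have h0 : PowerSeries.coeff (R := A) 0 (vSer h e (0:F) * PowerSeries.C (R := A) (y ^ s) * uSer h e (0:F))
      = PowerSeries.coeff (R := A) 0 (oneSubEtNegPow e ((s:F)*lam)
          * PowerSeries.mk (fun ℓ => dPow F e ℓ (y ^ s) * risePow h (1 : F) ℓ)) := by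
    simp [PowerSeries.coeff_zero_eq_constantCoeff, map_mul, vSer, uSer, oneSubEtNegPow,
      dPow, risePow, fallPow, riseC]
  have main : ∀ n : ℕ, PowerSeries.coeff (R := A) n
        (vSer h e (0:F) * PowerSeries.C (R := A) (y ^ s) * uSer h e (0:F))
      = PowerSeries.coeff (R := A) n (oneSubEtNegPow e ((s:F)*lam)
          * PowerSeries.mk (fun ℓ => dPow F e ℓ (y ^ s) * risePow h (1 : F) ℓ)) := by
    intro n
    induction n with
    | zero => exact h0
    | succ n ih =>
      have hne : ((n:F)+1) ≠ 0 := Nat.cast_add_one_ne_zero n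
      have e1 := recL n
      rw [ih] at e1
      have e2 := e1.trans (recR n).symm
      have := congrArg (fun w => ((n:F)+1)⁻¹ • w) e2
      simpa [inv_smul_smul₀ hne] using this
  exact PowerSeries.ext main
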